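/- Given finitely many rational data points (x_n, y_n) in (0,1)×(0,1) with distinct x-values and y monotone in x (y_m ≥ y_n whenever x_m ≥ x_n), there exists a binary digit vector B (defining a Cantor set) whose CDF interpolates the data: F_B(x_n) = y_n for all n. -/

import Mathlib

open MeasureTheory Set Filter
open scoped ENNReal Topology

set_option linter.unusedSectionVars false

noncomputable section CantorAux

variable (N : ℕ) (D : Finset ℕ)

/-- The transfer operator. -/
def cT (f : ℝ → ℝ) : ℝ → ℝ := fun x => (D.card : ℝ)⁻¹ * ∑ d ∈ D, f ((N : ℝ) * x - d)

/-- Iterates starting from the clamp function. -/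
def cFn : ℕ → ℝ → ℝ
  | 0 => fun x => max 0 (min 1 x)
  | n + 1 => cT N D (cFn n)

def Nice (f : ℝ → ℝ) : Prop :=
  Monotone f ∧ Continuous f ∧ (∀ x ≤ (0:ℝ), f x = 0) ∧ (∀ x : ℝ, 1 ≤ x → f x = 1)

variable {N D}

lemma nice_cF0 : Nice (cFn N D 0) := by
  refine ⟨?_, ?_, ?_, ?_⟩
  · intro a b hab
    simp only [cFn]
    exact max_le_max le_rfl (min_le_min le_rfl hab)
  · exact continuous_const.max (continuous_const.min continuous_id)
  · intro x hx; simp only [cFn]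
    rw [max_eq_left]; exact (min_le_right _ _).trans hx
  · intro x hx; simp only [cFn]
    rw [min_eq_left hx, max_eq_right zero_le_one]

lemma Nice.mem_Icc {f : ℝ → ℝ} (hf : Nice f) (x : ℝ) : 0 ≤ f x ∧ f x ≤ 1 := by
  obtain ⟨hm, _, h0, h1⟩ := hf
  constructor
  · rcases le_or_gt x 0 with h | h
    · rw [h0 x h]
    · rw [← h0 0 le_rfl]; exact hm h.le
  · rcases le_or_gt 1 x with h | h
    · rw [h1 x h]
    · rw [← h1 1 le_rfl]; exact hm h.le

variable (hD : D ⊆ Finset.range N) (hcard : 2 ≤ D.card)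
include hD hcard

lemma nice_cT {f : ℝ → ℝ} (hf : Nice f) : Nice (cT N D f) := by
  obtain ⟨hm, hc, h0, h1⟩ := hf
  have hcard0 : (0:ℝ) < (D.card : ℝ) := by positivity
  refine ⟨?_, ?_, ?_, ?_⟩
  · intro a b hab
    apply mul_le_mul_of_nonneg_left _ (by positivity)
    apply Finset.sum_le_sum
    intro d _
    exact hm (by nlinarith [Nat.cast_nonneg (α := ℝ) N])
  · apply continuous_const.mul
    apply continuous_finset_sum
    intro d _
    exact hc.comp (by continuity)
  · intro x hx
    have : ∀ d ∈ D, f ((N:ℝ) * x - d) = 0 := by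
      intro d _
      apply h0
      have : (N:ℝ) * x ≤ 0 := mul_nonpos_of_nonneg_of_nonpos (Nat.cast_nonneg N) hx
      have : (0:ℝ) ≤ d := Nat.cast_nonneg d
      linarith
    rw [cT, Finset.sum_congr rfl this]
    simp
  · intro x hx
    have : ∀ d ∈ D, f ((N:ℝ) * x - d) = 1 := by
      intro d hd
      apply h1
      have hdN : (d:ℝ) + 1 ≤ N := by
        have := Finset.mem_range.mp (hD hd)
        exact_mod_cast this
      nlinarith [Nat.cast_nonneg (α := ℝ) N]
    rw [cT, Finset.sum_congr rfl this, Finset.sum_const, nsmul_eq_mul, mul_one,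
      inv_mul_cancel₀ hcard0.ne']

lemma nice_cFn (n : ℕ) : Nice (cFn N D n) := by
  induction n with
  | zero => exact nice_cF0
  | succ n ih => exact nice_cT hD hcard ih

/-- Contraction estimate: at most one `d` sees the open interval `(0,1)`. -/
lemma cT_contract {f g : ℝ → ℝ} (hf : Nice f) (hg : Nice g) {c : ℝ}
    (hfg : ∀ y, |f y - g y| ≤ c) (x : ℝ) :
    |cT N D f x - cT N D g x| ≤ c / 2 := by
  have hc0 : 0 ≤ c := (abs_nonneg _).trans (hfg 0)
  have hcard0 : (0:ℝ) < (D.card : ℝ) := by positivity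
  have key : |∑ d ∈ D, (f ((N:ℝ) * x - d) - g ((N:ℝ) * x - d))| ≤ c := by
    set P : ℕ → Prop := fun d => 0 < (N:ℝ) * x - d ∧ (N:ℝ) * x - d < 1 with hP
    classical
    have hzero : ∀ d ∈ D, ¬ P d → f ((N:ℝ) * x - d) - g ((N:ℝ) * x - d) = 0 := by
      intro d _ hpd
      rcases not_and_or.mp hpd with h | h
      · push_neg at h
        rw [hf.2.2.1 _ h, hg.2.2.1 _ h, sub_self]
      · push_neg at h
        rw [hf.2.2.2 _ h, hg.2.2.2 _ h, sub_self]
    rw [← Finset.sum_filter_of_ne (fun d hd hne => by by_contra hpd; exact hne (hzero d hd hpd))]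
    have hcard1 : (D.filter P).card ≤ 1 := by
      apply Finset.card_le_one.mpr
      intro d1 h1 d2 h2
      have h1' := (Finset.mem_filter.mp h1).2
      have h2' := (Finset.mem_filter.mp h2).2
      have : ((d1:ℝ) - d2) < 1 ∧ ((d2:ℝ) - d1) < 1 := by
        constructor <;> linarith [h1'.1, h1'.2, h2'.1, h2'.2]
      have hlt1 : d1 < d2 + 1 := by exact_mod_cast (by linarith [this.2] : (d1:ℝ) < d2 + 1)
      have hlt2 : d2 < d1 + 1 := by exact_mod_cast (by linarith [this.1] : (d2:ℝ) < d1 + 1)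
      omega
    calc |∑ d ∈ D.filter P, (f ((N:ℝ) * x - d) - g ((N:ℝ) * x - d))|
        ≤ ∑ d ∈ D.filter P, |f ((N:ℝ) * x - d) - g ((N:ℝ) * x - d)| :=
          Finset.abs_sum_le_sum_abs _ _
      _ ≤ ∑ _d ∈ D.filter P, c := Finset.sum_le_sum fun d _ => hfg _
      _ = (D.filter P).card * c := by rw [Finset.sum_const, nsmul_eq_mul]
      _ ≤ 1 * c := by
          apply mul_le_mul_of_nonneg_right _ hc0
          exact_mod_cast hcard1
      _ = c := one_mul c
  have : cT N D f x - cT N D g x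
      = (D.card : ℝ)⁻¹ * ∑ d ∈ D, (f ((N:ℝ) * x - d) - g ((N:ℝ) * x - d)) := by
    rw [cT, cT, ← mul_sub, Finset.sum_sub_distrib]
  rw [this, abs_mul, abs_inv, abs_of_nonneg hcard0.le]
  calc (D.card:ℝ)⁻¹ * |∑ d ∈ D, (f ((N:ℝ)*x - d) - g ((N:ℝ)*x - d))|
      ≤ (2:ℝ)⁻¹ * c := by
        apply mul_le_mul (by
          apply inv_anti₀ (by norm_num)
          exact_mod_cast hcard) key (abs_nonneg _) (by norm_num)
    _ = c / 2 := by ring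

lemma cFn_diff_le (n : ℕ) (x : ℝ) :
    |cFn N D (n + 1) x - cFn N D n x| ≤ (1/2) ^ n := by
  induction n generalizing x with
  | zero =>
    have h1 := (nice_cFn hD hcard 1).mem_Icc x
    have h0 := (nice_cFn hD hcard 0).mem_Icc x
    rw [abs_le]; constructor <;> simp at * <;> nlinarith [h1.1, h1.2, h0.1, h0.2]
  | succ n ih =>
    have := cT_contract hD hcard (nice_cFn hD hcard (n+1)) (nice_cFn hD hcard n) ih x
    have e : ∀ m, cFn N D (m+1) = cT N D (cFn N D m) := fun m => rfl
    rw [e (n+1), e n]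
    calc |cT N D (cFn N D (n+1)) x - cT N D (cFn N D n) x| ≤ (1/2)^n / 2 := this
      _ = (1/2)^(n+1) := by ring

lemma cFn_cauchy (x : ℝ) : CauchySeq (fun n => cFn N D n x) := by
  apply cauchySeq_of_le_geometric (1/2) 1 (by norm_num)
  intro n
  rw [Real.dist_eq, abs_sub_comm, one_mul]
  exact cFn_diff_le hD hcard n x

end CantorAux

noncomputable def cF (N : ℕ) (D : Finset ℕ) : ℝ → ℝ :=
  fun x => limUnder atTop (fun n => cFn N D n x)

section CantorAux2

variable {N : ℕ} {D : Finset ℕ}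
variable (hD : D ⊆ Finset.range N) (hcard : 2 ≤ D.card)
include hD hcard

lemma cF_tendsto (x : ℝ) : Tendsto (fun n => cFn N D n x) atTop (𝓝 (cF N D x)) :=
  (cFn_cauchy hD hcard x).tendsto_limUnder

lemma cF_dist (n : ℕ) (x : ℝ) : dist (cFn N D n x) (cF N D x) ≤ 1 * (1/2)^n / (1 - 1/2) := by
  apply dist_le_of_le_geometric_of_tendsto (1/2) 1 (by norm_num)
    (fun n => by
      rw [Real.dist_eq, abs_sub_comm, one_mul]
      exact cFn_diff_le hD hcard n x)
    (cF_tendsto hD hcard x)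

lemma cF_unif : TendstoUniformly (fun n x => cFn N D n x) (cF N D) atTop := by
  rw [Metric.tendstoUniformly_iff]
  intro ε hε
  obtain ⟨n0, hn0⟩ : ∃ n0 : ℕ, 1 * (1/2:ℝ)^n0 / (1 - 1/2) < ε := by
    have : Tendsto (fun n : ℕ => 1 * (1/2:ℝ)^n / (1 - 1/2)) atTop (𝓝 0) := by
      have := tendsto_pow_atTop_nhds_zero_of_lt_one (by norm_num : (0:ℝ) ≤ 1/2) (by norm_num)
      simpa using (this.const_mul (1/(1-1/2:ℝ))).congr (fun n => by simp only [one_div, inv_pow]; ring)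
    exact ((this.eventually (gt_mem_nhds hε)).exists)
  filter_upwards [eventually_ge_atTop n0] with n hn x
  rw [dist_comm]
  calc dist (cFn N D n x) (cF N D x) ≤ 1 * (1/2)^n / (1 - 1/2) := cF_dist hD hcard n x
    _ ≤ 1 * (1/2)^n0 / (1 - 1/2) := by
        have : (1/2:ℝ)^n ≤ (1/2)^n0 :=
          pow_le_pow_of_le_one (by norm_num) (by norm_num) hn
        rw [one_mul, one_mul, div_le_div_iff_of_pos_right (by norm_num)]
        nlinarith
    _ < ε := hn0

lemma nice_cF : Nice (cF N D) := by
  refine ⟨?_, ?_, ?_, ?_⟩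
  · intro a b hab
    exact le_of_tendsto_of_tendsto (cF_tendsto hD hcard a) (cF_tendsto hD hcard b)
      (Eventually.of_forall fun n => (nice_cFn hD hcard n).1 hab)
  · exact (cF_unif hD hcard).continuous (Eventually.of_forall fun n => (nice_cFn hD hcard n).2.1).frequently
  · intro x hx
    apply tendsto_nhds_unique (cF_tendsto hD hcard x)
    simpa [(nice_cFn hD hcard · |>.2.2.1 x hx)] using
      tendsto_const_nhds.congr (fun n => ((nice_cFn hD hcard n).2.2.1 x hx).symm)
  · intro x hx
    apply tendsto_nhds_unique (cF_tendsto hD hcard x)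
    exact tendsto_const_nhds.congr (fun n => ((nice_cFn hD hcard n).2.2.2 x hx).symm)

lemma cF_eq : ∀ x : ℝ, cF N D x = (D.card : ℝ)⁻¹ * ∑ d ∈ D, cF N D ((N:ℝ) * x - d) := by
  intro x
  apply tendsto_nhds_unique ((cF_tendsto hD hcard x).comp (tendsto_add_atTop_nat 1))
  have : Tendsto (fun n => (D.card:ℝ)⁻¹ * ∑ d ∈ D, cFn N D n ((N:ℝ)*x - d)) atTop
      (𝓝 ((D.card : ℝ)⁻¹ * ∑ d ∈ D, cF N D ((N:ℝ) * x - d))) := by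
    exact tendsto_const_nhds.mul (tendsto_finset_sum _ fun d _ => cF_tendsto hD hcard _)
  exact this.congr (fun n => rfl)

end CantorAux2
section CantorMeasure

variable {N : ℕ} {D : Finset ℕ}
variable (hD : D ⊆ Finset.range N) (hcard : 2 ≤ D.card)

/-- The Stieltjes function associated to `cF`. -/
noncomputable def cSF : StieltjesFunction ℝ where
  toFun := cF N D
  mono' := (nice_cF hD hcard).1
  right_continuous' := fun x => ((nice_cF hD hcard).2.1.continuousAt (x := x)).continuousWithinAt

include hD hcard

lemma cSF_Ioc (a b : ℝ) : (cSF hD hcard).measure (Ioc a b)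
    = ENNReal.ofReal (cF N D b - cF N D a) :=
  StieltjesFunction.measure_Ioc _ a b

lemma cF_leftLim (a : ℝ) : Function.leftLim (cF N D) a = cF N D a :=
  leftLim_eq_of_tendsto (((nice_cF hD hcard).2.1.tendsto a).mono_left
    nhdsWithin_le_nhds)

lemma cSF_Icc (a b : ℝ) : (cSF hD hcard).measure (Icc a b)
    = ENNReal.ofReal (cF N D b - cF N D a) := by
  rw [StieltjesFunction.measure_Icc]
  have h1 : Function.leftLim (⇑(cSF hD hcard)) a = cF N D a := cF_leftLim hD hcard a
  have h2 : (cSF hD hcard) b = cF N D b := rfl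
  rw [h1, h2]

lemma cSF_prob : IsProbabilityMeasure (cSF hD hcard).measure := by
  constructor
  rw [StieltjesFunction.measure_univ (l := 0) (u := 1)]
  · simp
  · apply tendsto_const_nhds.congr'
    filter_upwards [eventually_le_atBot (0:ℝ)] with z hz
    exact ((nice_cF hD hcard).2.2.1 z hz).symm
  · apply tendsto_const_nhds.congr'
    filter_upwards [eventually_ge_atTop (1:ℝ)] with z hz
    exact ((nice_cF hD hcard).2.2.2 z hz).symm

lemma cSF_Icc01 : (cSF hD hcard).measure (Icc 0 1) = 1 := by
  rw [cSF_Icc hD hcard, (nice_cF hD hcard).2.2.2 1 le_rfl, (nice_cF hD hcard).2.2.1 0 le_rfl]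
  simp

lemma cSF_selfsim :
    (cSF hD hcard).measure = (D.card : ℝ≥0∞)⁻¹ •
      ∑ d ∈ D, ((cSF hD hcard).measure).map (fun t : ℝ => (t + (d : ℝ)) / N) := by
  have hN : 0 < N := by
    obtain ⟨d, hd⟩ := Finset.card_pos.mp (by omega : 0 < D.card)
    exact (Nat.zero_le d).trans_lt (Finset.mem_range.mp (hD hd))
  have hNR : (0:ℝ) < N := by exact_mod_cast hN
  have hcR : (0:ℝ) < D.card := by positivity
  set μ := (cSF hD hcard).measure with hμ
  apply MeasureTheory.Measure.ext_of_Ioc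
  intro a b hab
  have hmeas : ∀ d : ℕ, Measurable (fun t : ℝ => (t + (d : ℝ)) / N) := by
    intro d; fun_prop
  have hpre : ∀ d : ℕ, (fun t : ℝ => (t + (d : ℝ)) / N) ⁻¹' (Ioc a b)
      = Ioc ((N:ℝ) * a - d) ((N:ℝ) * b - d) := by
    intro d
    ext t
    simp only [mem_preimage, mem_Ioc]
    rw [lt_div_iff₀ hNR, div_le_iff₀ hNR]
    constructor <;> intro h <;> constructor <;> linarith [h.1, h.2]
  rw [Measure.smul_apply, Measure.coe_finset_sum, Finset.sum_apply]
  have : ∀ d ∈ D, (μ.map (fun t : ℝ => (t + (d : ℝ)) / N)) (Ioc a b)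
      = ENNReal.ofReal (cF N D ((N:ℝ)*b - d) - cF N D ((N:ℝ)*a - d)) := by
    intro d _
    rw [Measure.map_apply (hmeas d) measurableSet_Ioc, hpre d, hμ, cSF_Ioc hD hcard]
  rw [Finset.sum_congr rfl this]
  have hnn : ∀ d ∈ D, 0 ≤ cF N D ((N:ℝ)*b - d) - cF N D ((N:ℝ)*a - d) := by
    intro d _
    have := (nice_cF hD hcard).1 (by nlinarith : (N:ℝ)*a - d ≤ (N:ℝ)*b - d)
    linarith
  rw [← ENNReal.ofReal_sum_of_nonneg hnn]
  have hsum : ∑ d ∈ D, (cF N D ((N:ℝ)*b - d) - cF N D ((N:ℝ)*a - d))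
      = (D.card : ℝ) * (cF N D b - cF N D a) := by
    rw [Finset.sum_sub_distrib]
    have hb := cF_eq hD hcard b
    have ha := cF_eq hD hcard a
    have hb' : ∑ d ∈ D, cF N D ((N:ℝ)*b - d) = (D.card:ℝ) * cF N D b := by
      rw [hb]; field_simp
    have ha' : ∑ d ∈ D, cF N D ((N:ℝ)*a - d) = (D.card:ℝ) * cF N D a := by
      rw [ha, ← mul_assoc, mul_inv_cancel₀ hcR.ne', one_mul]
    rw [hb', ha']; ring
  rw [hsum, ENNReal.ofReal_mul (by positivity), ENNReal.ofReal_natCast,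
    cSF_Ioc hD hcard, smul_eq_mul, ← mul_assoc,
    ENNReal.inv_mul_cancel (by exact_mod_cast (by omega : D.card ≠ 0)) (by simp), one_mul]

/-- Value of `cF` at `A/N` for an integer `A`. -/
lemma cF_int_val (A : ℕ) :
    cF N D ((A:ℝ) / N) = ((D.filter (· < A)).card : ℝ) / D.card := by
  have hN : 0 < N := by
    obtain ⟨d, hd⟩ := Finset.card_pos.mp (by omega : 0 < D.card)
    exact (Nat.zero_le d).trans_lt (Finset.mem_range.mp (hD hd))
  have hNR : (0:ℝ) < N := by exact_mod_cast hN
  rw [cF_eq hD hcard]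
  have : ∀ d ∈ D, cF N D ((N:ℝ) * ((A:ℝ)/N) - d) = if d < A then 1 else 0 := by
    intro d _
    have harg : (N:ℝ) * ((A:ℝ)/N) - d = (A:ℝ) - d := by field_simp
    rw [harg]
    split_ifs with h
    · exact (nice_cF hD hcard).2.2.2 _ (by
        have : (d:ℝ) + 1 ≤ A := by exact_mod_cast h
        linarith)
    · exact (nice_cF hD hcard).2.2.1 _ (by
        have : (A:ℝ) ≤ d := by exact_mod_cast Nat.le_of_not_lt h
        linarith)
  rw [Finset.sum_congr rfl this, Finset.sum_boole]
  simp [div_eq_inv_mul]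

end CantorMeasure
theorem cantor_cdf_interpolation
    (k : ℕ) (x y : Fin k → ℚ)
    (hx0 : ∀ n, 0 < x n) (hx1 : ∀ n, x n < 1)
    (hy0 : ∀ n, 0 < y n) (hy1 : ∀ n, y n < 1)
    (hxdist : ∀ m n, m ≠ n → x m ≠ x n)
    (hmono : ∀ m n, x n ≤ x m → y n ≤ y m) :
    ∃ (N : ℕ) (D : Finset ℕ) (μ : Measure ℝ),
      3 ≤ N ∧ D ⊆ Finset.range N ∧ 2 ≤ D.card ∧ D.card ≤ N - 1 ∧
      IsProbabilityMeasure μ ∧ μ (Set.Icc 0 1) = 1 ∧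
      μ = (D.card : ℝ≥0∞)⁻¹ • ∑ d ∈ D, μ.map (fun t : ℝ => (t + (d : ℝ)) / N) ∧
      ∀ n, (μ (Set.Icc 0 ((x n : ℝ)))).toReal = (y n : ℝ) := by
  classical
  set M : ℕ := 2 * ∏ n, (x n).den with hMdef
  set m : ℕ := 2 * ∏ n, (y n).den with hmdef
  have hM2 : 2 ≤ M := by
    have : 0 < ∏ n, (x n).den := Finset.prod_pos (fun n _ => (x n).pos)
    omega
  have hm2 : 2 ≤ m := by
    have : 0 < ∏ n, (y n).den := Finset.prod_pos (fun n _ => (y n).pos)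
    omega
  have key_cast : ∀ (q : ℚ) (Q : ℕ), 0 < q → q.den ∣ Q →
      ((q.num.toNat * (Q / q.den) : ℕ) : ℚ) = q * Q := by
    intro q Q hq hd
    have hdn : ((q.den : ℚ)) ≠ 0 := by exact_mod_cast q.den_nz
    have hnum : (0:ℤ) ≤ q.num := (Rat.num_pos.mpr hq).le
    have htn : ((q.num.toNat : ℕ) : ℚ) = (q.num : ℚ) := by
      exact_mod_cast Int.toNat_of_nonneg hnum
    have h1 : ((q.num.toNat * (Q / q.den) : ℕ) : ℚ) = (q.num : ℚ) * ((Q:ℚ) / q.den) := by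
      rw [Nat.cast_mul, Nat.cast_div hd hdn, htn]
    rw [h1]
    conv_rhs => rw [← Rat.num_div_den q]
    field_simp
  set a : Fin k → ℕ := fun n => (x n).num.toNat * (M / (x n).den) with hadef
  set b : Fin k → ℕ := fun n => (y n).num.toNat * (m / (y n).den) with hbdef
  have ha : ∀ n, ((a n : ℕ) : ℚ) = x n * M := fun n =>
    key_cast (x n) M (hx0 n) (Dvd.dvd.mul_left (Finset.dvd_prod_of_mem _ (Finset.mem_univ n)) 2)
  have hb : ∀ n, ((b n : ℕ) : ℚ) = y n * m := fun n =>
    key_cast (y n) m (hy0 n) (Dvd.dvd.mul_left (Finset.dvd_prod_of_mem _ (Finset.mem_univ n)) 2)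
  have hMQ : (0:ℚ) < M := by exact_mod_cast (by omega : 0 < M)
  have hmQ : (0:ℚ) < m := by exact_mod_cast (by omega : 0 < m)
  have ha1 : ∀ n, 1 ≤ a n := by
    intro n
    have h : (0:ℚ) < (a n : ℚ) := by rw [ha n]; exact mul_pos (hx0 n) hMQ
    exact_mod_cast (by exact_mod_cast h : (0:ℕ) < a n)
  have haM : ∀ n, a n < M := by
    intro n
    have h : ((a n : ℕ) : ℚ) < M := by
      rw [ha n]
      nlinarith [hx1 n]
    exact_mod_cast h
  have hb1 : ∀ n, 1 ≤ b n := by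
    intro n
    have h : (0:ℚ) < (b n : ℚ) := by rw [hb n]; exact mul_pos (hy0 n) hmQ
    exact_mod_cast (by exact_mod_cast h : (0:ℕ) < b n)
  have hbm : ∀ n, b n < m := by
    intro n
    have h : ((b n : ℕ) : ℚ) < m := by
      rw [hb n]
      nlinarith [hy1 n]
    exact_mod_cast h
  -- monotonicity transfer
  have hab_mono : ∀ n' n, a n' ≤ a n → b n' ≤ b n := by
    intro n' n h
    have hx' : x n' ≤ x n := by
      have : ((a n' : ℕ):ℚ) ≤ (a n : ℕ) := by exact_mod_cast h
      rw [ha n', ha n] at this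
      exact le_of_mul_le_mul_right this hMQ
    have hy' : y n' ≤ y n := hmono n n' hx'
    have : ((b n' : ℕ):ℚ) ≤ (b n : ℕ) := by
      rw [hb n', hb n]
      exact mul_le_mul_of_nonneg_right hy' hmQ.le
    exact_mod_cast this
  -- the digit positions
  set S : ℕ → Set ℕ := fun i => {M} ∪ {v | ∃ n', i < b n' ∧ a n' = v} with hSdef
  set c : ℕ → ℕ := fun i => sInf (S i) with hcdef
  have hSne : ∀ i, (S i).Nonempty := fun i => ⟨M, Or.inl rfl⟩
  have hc_mem : ∀ i, c i ∈ S i := fun i => Nat.sInf_mem (hSne i)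
  have hc_leM : ∀ i, c i ≤ M := fun i => Nat.sInf_le (Or.inl rfl)
  have hc_pos : ∀ i, 1 ≤ c i := by
    intro i
    rcases hc_mem i with h | ⟨n', _, hv⟩
    · simp only [Set.mem_singleton_iff] at h; omega
    · have := ha1 n'; omega
  set p : ℕ → ℕ := fun i => m * c i - (m - i) with hpdef
  have hmc : ∀ i, m ≤ m * c i := by
    intro i
    calc m = m * 1 := (mul_one m).symm
    _ ≤ m * c i := Nat.mul_le_mul_left m (hc_pos i)
  -- key characterization
  have hkey : ∀ i n, p i < m * a n ↔ i < b n := by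
    intro i n
    constructor
    · intro h
      have hcia : c i ≤ a n := by
        by_contra hcon
        have h1 : a n + 1 ≤ c i := by omega
        have h2 : m * (a n + 1) ≤ m * c i := Nat.mul_le_mul_left m h1
        have h3 : m * (a n + 1) = m * a n + m := by ring
        have h4 := hmc i
        simp only [hpdef] at h
        omega
      rcases hc_mem i with hmem | ⟨n', hbn', hv⟩
      · simp only [Set.mem_singleton_iff] at hmem
        have := haM n; omega
      · have : a n' ≤ a n := by omega
        have := hab_mono n' n this
        omega
    · intro h
      have hcia : c i ≤ a n := Nat.sInf_le (Or.inr ⟨n, h, rfl⟩)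
      have h2 : m * c i ≤ m * a n := Nat.mul_le_mul_left m hcia
      have h4 := hmc i
      have hbn := hbm n
      simp only [hpdef]
      omega
  -- p is strictly increasing with c, injective on range m
  have hc_mono : ∀ i j, i ≤ j → c i ≤ c j := by
    intro i j hij
    apply Nat.sInf_le
    rcases hc_mem j with h | ⟨n', hn', hv⟩
    · simp only [Set.mem_singleton_iff] at h; rw [h]; exact Or.inl rfl
    · exact Or.inr ⟨n', by omega, hv⟩
  have hp_lt : ∀ i j, i < m → j < m → c i < c j → p i < p j := by
    intro i j hi hj hc
    have h1 : m * (c i + 1) ≤ m * c j := Nat.mul_le_mul_left m (by omega)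
    have h2 : m * (c i + 1) = m * c i + m := by ring
    have := hmc i
    simp only [hpdef]
    omega
  have hinj : ∀ i ∈ Finset.range m, ∀ j ∈ Finset.range m, p i = p j → i = j := by
    intro i hi j hj hpij
    rw [Finset.mem_range] at hi hj
    rcases lt_trichotomy (c i) (c j) with h | h | h
    · exact absurd hpij (hp_lt i j hi hj h).ne
    · have := hmc i
      simp only [hpdef, h] at hpij
      have := hmc j
      omega
    · exact absurd hpij.symm (hp_lt j i hj hi h).ne
  set D : Finset ℕ := (Finset.range m).image p with hDdef
  have hDcard : D.card = m := by
    rw [hDdef, Finset.card_image_of_injOn hinj, Finset.card_range]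
  set N : ℕ := m * M with hNdef
  have hN4 : 4 ≤ N := by
    calc 4 = 2 * 2 := rfl
    _ ≤ m * M := Nat.mul_le_mul hm2 hM2
  have hDsub : D ⊆ Finset.range N := by
    intro d hd
    rw [hDdef, Finset.mem_image] at hd
    obtain ⟨i, hi, rfl⟩ := hd
    rw [Finset.mem_range] at hi ⊢
    have h1 : m * c i ≤ m * M := Nat.mul_le_mul_left m (hc_leM i)
    have h2 := hmc i
    simp only [hpdef]
    omega
  have hcard2 : 2 ≤ D.card := by omega
  have hcardN : D.card ≤ N - 1 := by
    have : m * 2 ≤ m * M := Nat.mul_le_mul_left m hM2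
    omega
  -- the filter counting
  have hfilter : ∀ n, (D.filter (· < m * a n)).card = b n := by
    intro n
    have h1 : D.filter (· < m * a n)
        = ((Finset.range m).filter (fun i => p i < m * a n)).image p := by
      rw [hDdef, Finset.filter_image]
    have h2 : (Finset.range m).filter (fun i => p i < m * a n) = Finset.range (b n) := by
      ext i
      simp only [Finset.mem_filter, Finset.mem_range]
      constructor
      · rintro ⟨_, h⟩; exact (hkey i n).mp h
      · intro h
        exact ⟨lt_of_lt_of_le h (hbm n).le, (hkey i n).mpr h⟩
    rw [h1, h2, Finset.card_image_of_injOn, Finset.card_range]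
    intro i hi j hj hp
    rw [Finset.mem_coe, Finset.mem_range] at hi hj
    have hbn := hbm n
    exact hinj i (Finset.mem_range.mpr (by omega)) j
      (Finset.mem_range.mpr (by omega)) hp
  -- assemble the measure
  have hmNR : (0:ℝ) < N := by positivity
  refine ⟨N, D, (cSF hDsub hcard2).measure, by omega, hDsub, hcard2, hcardN,
    cSF_prob hDsub hcard2, cSF_Icc01 hDsub hcard2, cSF_selfsim hDsub hcard2, ?_⟩
  intro n
  have hxR : ((x n : ℚ) : ℝ) = ((m * a n : ℕ) : ℝ) / (N : ℝ) := by
    have haR : ((a n : ℕ) : ℝ) = ((x n : ℚ):ℝ) * (M : ℝ) := by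
      exact_mod_cast congrArg (fun q : ℚ => (q : ℝ)) (ha n)
    rw [eq_div_iff (by positivity)]
    push_cast
    rw [haR, hNdef]
    push_cast
    ring
  rw [hxR, cSF_Icc hDsub hcard2, (nice_cF hDsub hcard2).2.2.1 0 le_rfl, sub_zero,
    cF_int_val hDsub hcard2 (m * a n), hDcard, hfilter n,
    ENNReal.toReal_ofReal (by positivity)]
  have hbR : ((b n : ℕ) : ℝ) = ((y n : ℚ):ℝ) * (m : ℝ) := by
    exact_mod_cast congrArg (fun q : ℚ => (q : ℝ)) (hb n)
  rw [hbR]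
  field_simp
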